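/- Let (M,g,J) be a pseudo-Hermitian manifold (J integrable). Then ∇Ω ∈ U₃,₋ pointwise: ∇Ω(x,y;z) = ∇Ω(x,Jy;Jz) for all vector fields x,y,z. -/

import Mathlib

open scoped Matrix
/-- The metric as a function of the point: `g_p(x,y) = xᵀ G(p) y`. -/
def gfun {m : ℕ} (G : (Fin m → ℝ) → Matrix (Fin m) (Fin m) ℝ)
    (p x y : Fin m → ℝ) : ℝ := x ⬝ᵥ (G p).mulVec y

/-- Lowered Christoffel term: `g(∇_z x, w)` for constant (coordinate) vector fields,
given by the Koszul formula `½(∂_z g(x,w) + ∂_x g(z,w) − ∂_w g(z,x))`. -/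
noncomputable def Klow {m : ℕ} (G : (Fin m → ℝ) → Matrix (Fin m) (Fin m) ℝ)
    (z x w p : Fin m → ℝ) : ℝ :=
  (1/2) * (fderiv ℝ (fun q => gfun G q x w) p z + fderiv ℝ (fun q => gfun G q z w) p x
    - fderiv ℝ (fun q => gfun G q z x) p w)

/-- `∇Ω(x,y;z)(p) = ∂_z g(x,Jy) − g(∇_z x, Jy) − g(x, J∇_z y)`, for constant vector
fields; here `g(x, J∇_z y) = −g(Jx, ∇_z y)` by Hermitian invariance. -/
noncomputable def nablaOmegaC {m : ℕ} (G : (Fin m → ℝ) → Matrix (Fin m) (Fin m) ℝ)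
    (J : Matrix (Fin m) (Fin m) ℝ) (x y z p : Fin m → ℝ) : ℝ :=
  fderiv ℝ (fun q => gfun G q x (J.mulVec y)) p z
    - Klow G z x (J.mulVec y) p + Klow G z y (J.mulVec x) p

/-- On a pseudo-Hermitian manifold (in local coordinates in which the integrable
structure `J` is constant), `∇Ω ∈ U₃,₋` pointwise: `∇Ω(x,y;z) = ∇Ω(x,Jy;Jz)`. -/
theorem stmt_18 {m : ℕ} (G : (Fin m → ℝ) → Matrix (Fin m) (Fin m) ℝ)
    (J : Matrix (Fin m) (Fin m) ℝ)
    (hGdiff : ∀ x y, Differentiable ℝ (fun p => gfun G p x y))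
    (hGsymm : ∀ p x y, gfun G p x y = gfun G p y x)
    (hGnd : ∀ p x, (∀ y, gfun G p x y = 0) → x = 0)
    (hJ2 : J * J = -1)
    (hJG : ∀ p x y, gfun G p (J.mulVec x) (J.mulVec y) = gfun G p x y) :
    ∀ x y z p, nablaOmegaC G J x y z p = nablaOmegaC G J x (J.mulVec y) (J.mulVec z) p := by

  intro x y z p
  -- J ∘ J = -1 on vectors
  have hJJv : ∀ v : Fin m → ℝ, J.mulVec (J.mulVec v) = -v := by
    intro v
    rw [Matrix.mulVec_mulVec, hJ2, Matrix.neg_mulVec, Matrix.one_mulVec]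
  -- gfun is odd in second arg under neg
  have hneg2 : ∀ p' a b, gfun G p' a (-b) = - gfun G p' a b := by
    intro p' a b
    simp [gfun, Matrix.mulVec_neg]
  -- antisymmetry of Ω
  have hanti : ∀ p' a b, gfun G p' a (J.mulVec b) = - gfun G p' b (J.mulVec a) := by
    intro p' a b
    rw [← hJG p' a (J.mulVec b), hJJv b, hneg2, hGsymm]
  -- derivative versions
  have hDanti : ∀ a b p', fderiv ℝ (fun q => gfun G q a (J.mulVec b)) p'
      = - fderiv ℝ (fun q => gfun G q b (J.mulVec a)) p' := by
    intro a b p'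
    have h : (fun q => gfun G q a (J.mulVec b)) = fun q => -(gfun G q b (J.mulVec a)) :=
      funext fun q => hanti q a b
    rw [h, fderiv_fun_neg]
  have hDJJ : ∀ a b p', fderiv ℝ (fun q => gfun G q (J.mulVec a) (J.mulVec b)) p'
      = fderiv ℝ (fun q => gfun G q a b) p' := by
    intro a b p'
    have h : (fun q => gfun G q (J.mulVec a) (J.mulVec b)) = fun q => gfun G q a b :=
      funext fun q => hJG q a b
    rw [h]
  have hDsym : ∀ a b p', fderiv ℝ (fun q => gfun G q a b) p'
      = fderiv ℝ (fun q => gfun G q b a) p' := by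
    intro a b p'
    have h : (fun q => gfun G q a b) = fun q => gfun G q b a := funext fun q => hGsymm q a b
    rw [h]
  have hDneg2 : ∀ a b p', fderiv ℝ (fun q => gfun G q a (-b)) p'
      = - fderiv ℝ (fun q => gfun G q a b) p' := by
    intro a b p'
    have h : (fun q => gfun G q a (-b)) = fun q => -(gfun G q a b) :=
      funext fun q => hneg2 q a b
    rw [h, fderiv_fun_neg]
  simp only [nablaOmegaC, Klow, hJJv, hDJJ, hDneg2, map_neg, ContinuousLinearMap.neg_apply]
  rw [hDanti x y p, hDsym (J.mulVec z) y p, hDsym (J.mulVec z) x p, hDanti y z p,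
    hDanti x z p, hDsym x y p]
  simp only [ContinuousLinearMap.neg_apply]
  ring
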